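/- Let a₁,…,a₅ ∈ ℂ satisfy Im(aⱼ) < 0 for j = 1,…,5 and aⱼ² ≠ aₖ² for all j ≠ k, and set A = a₁ + a₂ + a₃ + a₄ + a₅. Then (1/(π i)) ∫_ℝ y² (A² − y²) / ∏_{j=1}^{5} ((aⱼ + y)(aⱼ − y)) dy = Σ_{j=1}^{5} aⱼ (A² − aⱼ²) / ∏_{k=1, k ≠ j}^{5} (aₖ² − aⱼ²). -/

import Mathlib

open MeasureTheory Complex Filter Topology

lemma invTop : Tendsto (fun y : ℝ => ((y : ℂ))⁻¹) atTop (𝓝 0) := by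
  have := (Complex.continuous_ofReal.tendsto 0).comp (tendsto_inv_atTop_zero (𝕜 := ℝ))
  simpa [Function.comp_def] using this

lemma argTop (a : ℂ) : Tendsto (fun y : ℝ => Complex.arg (a + y)) atTop (𝓝 0) := by
  have h1 : Tendsto (fun y : ℝ => a * (y : ℂ)⁻¹ + 1) atTop (𝓝 1) := by
    have := (invTop.const_mul a).add_const 1
    simpa using this
  have h2 : Tendsto (fun y : ℝ => Complex.arg (a * (y:ℂ)⁻¹ + 1)) atTop (𝓝 0) := by
    have hc : ContinuousAt Complex.arg 1 := Complex.continuousAt_arg (by simp [Complex.slitPlane])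
    simpa [Function.comp_def] using (hc.tendsto.comp h1)
  refine h2.congr' ?_
  filter_upwards [eventually_gt_atTop (0:ℝ)] with y hy
  have hy' : (y:ℂ) ≠ 0 := by exact_mod_cast hy.ne'
  have : a * (y:ℂ)⁻¹ + 1 = ((y⁻¹ : ℝ) : ℂ) * (a + y) := by
    push_cast
    field_simp
  rw [this, Complex.arg_real_mul _ (by positivity)]

lemma absSubTop (a : ℂ) : Tendsto (fun y : ℝ => ‖a - y‖) atTop atTop := by
  refine tendsto_atTop_mono' atTop ?_ (tendsto_atTop_add_const_right atTop (-a.re) tendsto_id)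
  filter_upwards [eventually_ge_atTop a.re] with y hy
  calc y - a.re = |(a - (y:ℂ)).re| := by
        simp [Complex.sub_re, abs_of_nonpos, sub_nonpos.mpr hy]
  _ ≤ ‖a - y‖ := Complex.abs_re_le_norm _

lemma argNegTop (a : ℂ) (ha : a.im < 0) :
    Tendsto (fun y : ℝ => Complex.arg (a - y)) atTop (𝓝 (-Real.pi)) := by
  have h0 : Tendsto (fun y : ℝ => -a.im / ‖a - y‖) atTop (𝓝 0) :=
    tendsto_const_nhds.div_atTop (absSubTop a)
  have h1 : Tendsto (fun y : ℝ => Real.arcsin (-a.im / ‖a - y‖) - Real.pi) atTop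
      (𝓝 (-Real.pi)) := by
    have := ((Real.continuous_arcsin.tendsto 0).comp h0).sub_const Real.pi
    simpa using this
  refine h1.congr' ?_
  filter_upwards [eventually_gt_atTop a.re] with y hy
  rw [Complex.arg_of_re_neg_of_im_neg (by simpa using sub_neg.mpr hy) (by simpa using ha)]
  simp [Complex.sub_im]

lemma ratioTop (a : ℂ) (ha : a.im ≠ 0) :
    Tendsto (fun y : ℝ => (a + y) / (a - y)) atTop (𝓝 (-1)) := by
  have h1 : Tendsto (fun y : ℝ => (a * (y:ℂ)⁻¹ + 1) / (a * (y:ℂ)⁻¹ - 1)) atTop (𝓝 (-1)) := by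
    have hn := (invTop.const_mul a).add_const 1
    have hd := (invTop.const_mul a).sub_const 1
    have := (hn.div hd (by simp)).congr (fun y => rfl)
    simpa [Pi.div_def] using this
  refine h1.congr' ?_
  filter_upwards [eventually_gt_atTop (0:ℝ)] with y hy
  have hy' : (y:ℂ) ≠ 0 := by exact_mod_cast hy.ne'
  have hd : a - (y:ℂ) ≠ 0 := fun h => by
    have := congrArg Complex.im h; simp at this; exact ha this
  field_simp

lemma logAbsTop (a : ℂ) (ha : a.im ≠ 0) :
    Tendsto (fun y : ℝ => Real.log (‖a + y‖) - Real.log (‖a - y‖))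
      atTop (𝓝 0) := by
  have habs := (continuous_norm.tendsto (-1)).comp (ratioTop a ha)
  have h2 : Tendsto (fun y : ℝ => ‖a + y‖ / ‖a - y‖) atTop (𝓝 1) := by
    simpa [Function.comp_def, norm_div] using habs
  have h1 := ((Real.continuousAt_log one_ne_zero).tendsto).comp h2
  simp only [Function.comp_def, Real.log_one] at h1
  refine h1.congr ?_
  intro y
  have hp : a + (y:ℂ) ≠ 0 := fun h => by
    have := congrArg Complex.im h; simp at this; exact ha this
  have hd : a - (y:ℂ) ≠ 0 := fun h => by
    have := congrArg Complex.im h; simp at this; exact ha this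
  rw [Real.log_div (norm_ne_zero_iff.mpr hp) (norm_ne_zero_iff.mpr hd)]

-- log difference limit at +infinity
lemma logDiffTop (a : ℂ) (ha : a.im < 0) :
    Tendsto (fun y : ℝ => Complex.log (a + y) - Complex.log (a - y)) atTop
      (𝓝 (Real.pi * Complex.I)) := by
  have hL := logAbsTop a ha.ne
  have hA : Tendsto (fun y : ℝ => Complex.arg (a + y) - Complex.arg (a - y)) atTop
      (𝓝 Real.pi) := by
    have := (argTop a).sub (argNegTop a ha)
    simpa using this
  have h1 : Tendsto (fun y : ℝ =>
      ((Real.log (‖a + y‖) - Real.log (‖a - y‖) : ℝ) : ℂ) +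
      ((Complex.arg (a + y) - Complex.arg (a - y) : ℝ) : ℂ) * Complex.I) atTop
      (𝓝 (Real.pi * Complex.I)) := by
    have c1 := (Complex.continuous_ofReal.tendsto 0).comp hL
    have c2 := ((Complex.continuous_ofReal.tendsto Real.pi).comp hA).mul_const Complex.I
    have := c1.add c2
    simpa using this
  refine h1.congr ?_
  intro y
  have e1 : Complex.log (a + y) =
      ((Real.log (‖a + y‖) : ℝ) : ℂ) + (Complex.arg (a + y) : ℝ) * Complex.I := rfl
  have e2 : Complex.log (a - y) =
      ((Real.log (‖a - y‖) : ℝ) : ℂ) + (Complex.arg (a - y) : ℝ) * Complex.I := rfl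
  rw [e1, e2]
  push_cast
  ring

lemma logDiffBot (a : ℂ) (ha : a.im < 0) :
    Tendsto (fun y : ℝ => Complex.log (a + y) - Complex.log (a - y)) atBot
      (𝓝 (-(Real.pi * Complex.I))) := by
  have h := ((logDiffTop a ha).comp tendsto_neg_atBot_atTop).neg
  refine h.congr ?_
  intro y
  simp only [Function.comp]
  push_cast
  ring_nf

lemma keyIntegral (a : ℂ) (ha : a.im < 0)
    (hInt : Integrable fun y : ℝ => (a ^ 2 - (y:ℂ) ^ 2)⁻¹) :
    ∫ y : ℝ, (a ^ 2 - (y:ℂ) ^ 2)⁻¹ = Real.pi * Complex.I / a := by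
  have ha0 : a ≠ 0 := fun h => by simp [h] at ha
  set F : ℝ → ℂ := fun y => (2 * a)⁻¹ * (Complex.log (a + y) - Complex.log (a - y)) with hF
  have hp : ∀ y : ℝ, a + (y:ℂ) ≠ 0 := fun y h => by
    have := congrArg Complex.im h; simp at this; exact ha.ne this
  have hm : ∀ y : ℝ, a - (y:ℂ) ≠ 0 := fun y h => by
    have := congrArg Complex.im h; simp at this; exact ha.ne this
  have hderiv : ∀ y : ℝ, HasDerivAt F ((a ^ 2 - (y:ℂ) ^ 2)⁻¹) y := by
    intro y
    have h1 : HasDerivAt (fun z : ℂ => Complex.log (a + z)) (a + (y:ℂ))⁻¹ (y:ℂ) := by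
      have hs : a + (y:ℂ) ∈ Complex.slitPlane := Or.inr (by simpa using ha.ne)
      have := (Complex.hasDerivAt_log hs).comp (y:ℂ) ((hasDerivAt_id (y:ℂ)).const_add a)
      simpa [Function.comp_def] using this
    have h2 : HasDerivAt (fun z : ℂ => Complex.log (a - z)) (-(a - (y:ℂ))⁻¹) (y:ℂ) := by
      have hs : a - (y:ℂ) ∈ Complex.slitPlane := Or.inr (by simpa using ha.ne)
      have hin : HasDerivAt (fun z : ℂ => a - z) (-1) (y:ℂ) := by
        exact (hasDerivAt_id (y:ℂ)).const_sub a
      have := (Complex.hasDerivAt_log hs).comp (y:ℂ) hin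
      simpa [Function.comp_def] using this
    have h3 := ((h1.sub h2).const_mul ((2*a)⁻¹)).comp_ofReal
    have hfac : a ^ 2 - (y:ℂ) ^ 2 = (a + y) * (a - y) := by ring
    have hq : a ^ 2 - (y:ℂ) ^ 2 ≠ 0 := by
      rw [hfac]; exact mul_ne_zero (hp y) (hm y)
    have hpy := hp y
    have hmy := hm y
    have heq : (2*a)⁻¹ * ((a + (y:ℂ))⁻¹ - -(a - (y:ℂ))⁻¹) = (a ^ 2 - (y:ℂ) ^ 2)⁻¹ := by
      field_simp
      ring
    rw [heq] at h3
    exact h3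
  have := integral_of_hasDerivAt_of_tendsto hderiv hInt
    (((logDiffBot a ha).const_mul ((2*a)⁻¹)))
    (((logDiffTop a ha).const_mul ((2*a)⁻¹)))
  rw [this]
  field_simp
  ring


lemma keyIntegrable (a : ℂ) (ha : a.im < 0) :
    Integrable fun y : ℝ => (a ^ 2 - (y:ℂ) ^ 2)⁻¹ := by
  have hp : ∀ y : ℝ, a + (y:ℂ) ≠ 0 := fun y h => by
    have := congrArg Complex.im h; simp at this; exact ha.ne this
  have hm : ∀ y : ℝ, a - (y:ℂ) ≠ 0 := fun y h => by
    have := congrArg Complex.im h; simp at this; exact ha.ne this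
  have hq : ∀ y : ℝ, a ^ 2 - (y:ℂ) ^ 2 ≠ 0 := fun y => by
    have : a ^ 2 - (y:ℂ) ^ 2 = (a + y) * (a - y) := by ring
    rw [this]; exact mul_ne_zero (hp y) (hm y)
  have hcont : Continuous fun y : ℝ => (a ^ 2 - (y:ℂ) ^ 2)⁻¹ := by
    apply Continuous.inv₀
    · continuity
    · exact hq
  set e : ℝ := -a.im with he
  have he0 : 0 < e := by simpa [he] using ha
  set R : ℝ := 1 + 2 * ‖a‖ with hR
  set C : ℝ := max ((1 + R ^ 2) / e ^ 2) 4 with hC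
  have hC0 : 0 < C := lt_of_lt_of_le (by norm_num) (le_max_right _ _)
  have key : ∀ y : ℝ, ‖(a ^ 2 - (y:ℂ) ^ 2)⁻¹‖ ≤ C * (1 + y ^ 2)⁻¹ := by
    intro y
    have hy2 : (0:ℝ) < 1 + y ^ 2 := by positivity
    have habs : ‖a ^ 2 - (y:ℂ) ^ 2‖ = ‖a + y‖ * ‖a - y‖ := by
      rw [← norm_mul]
      congr 1
      ring
    have hlow : (1 + y ^ 2) / C ≤ ‖a ^ 2 - (y:ℂ) ^ 2‖ := by
      rcases le_or_gt |y| R with hcase | hcase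
      · have h1 : e ≤ ‖a + y‖ := by
          calc e = |(a + (y:ℂ)).im| := by simp [he, abs_of_neg ha]
          _ ≤ _ := Complex.abs_im_le_norm _
        have h2 : e ≤ ‖a - y‖ := by
          calc e = |(a - (y:ℂ)).im| := by simp [he, abs_of_neg ha]
          _ ≤ _ := Complex.abs_im_le_norm _
        have : (1 + y ^ 2) / C ≤ e ^ 2 := by
          rw [div_le_iff₀ hC0]
          calc 1 + y ^ 2 ≤ 1 + R ^ 2 := by
                have : y ^ 2 ≤ R ^ 2 := by
                  rw [← _root_.sq_abs y]
                  apply pow_le_pow_left₀ (abs_nonneg y) hcase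
                linarith
          _ = (1 + R ^ 2) / e ^ 2 * e ^ 2 := by field_simp
          _ ≤ C * e ^ 2 := by
                apply mul_le_mul_of_nonneg_right (le_max_left _ _) (by positivity)
          _ = e ^ 2 * C := mul_comm _ _
        refine this.trans ?_
        rw [habs, sq]
        exact mul_le_mul h1 h2 he0.le (he0.le.trans h1)
      · have h1 : (|y| + 1) / 2 ≤ ‖a + y‖ := by
          have tri : |y| - ‖a‖ ≤ ‖a + y‖ := by
            have h := norm_sub_norm_le ((y:ℂ)) (-a)
            have e1 : (y:ℂ) - (-a) = a + y := by ring
            rw [e1] at h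
            simpa [Complex.norm_real] using h
          refine le_trans ?_ tri
          rw [hR] at hcase
          linarith
        have h2 : (|y| + 1) / 2 ≤ ‖a - y‖ := by
          have tri : |y| - ‖a‖ ≤ ‖a - y‖ := by
            have h := norm_sub_norm_le ((y:ℂ)) a
            rw [norm_sub_rev] at h
            simpa [Complex.norm_real] using h
          refine le_trans ?_ tri
          rw [hR] at hcase
          linarith
        have h3 : (1 + y ^ 2) / C ≤ (1 + y ^ 2) / 4 := by
          apply div_le_div_of_nonneg_left (by positivity) (by norm_num) (le_max_right _ _)
        have h4 : (1 + y ^ 2) / 4 ≤ ((|y| + 1) / 2) ^ 2 := by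
          rw [div_pow]
          rw [div_le_div_iff₀ (by norm_num) (by norm_num)]
          nlinarith [_root_.sq_abs y, abs_nonneg y]
        refine h3.trans (h4.trans ?_)
        rw [habs, sq]
        have hpos : (0:ℝ) ≤ (|y| + 1) / 2 := by positivity
        exact mul_le_mul h1 h2 hpos (hpos.trans h1)
    rw [norm_inv]
    have hpos : (0:ℝ) < (1 + y ^ 2) / C := by positivity
    calc (‖a ^ 2 - (y:ℂ) ^ 2‖)⁻¹ ≤ ((1 + y ^ 2) / C)⁻¹ :=
          inv_anti₀ hpos hlow
    _ = C * (1 + y ^ 2)⁻¹ := by rw [inv_div, div_eq_mul_inv]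
  exact (integrable_inv_one_add_sq.const_mul C).mono' hcont.aestronglyMeasurable
    (ae_of_all _ key)


open Finset in
lemma partialFractions (b : Fin 5 → ℂ) (hb : Function.Injective b) (s u : ℂ)
    (hu : ∀ j, b j - u ≠ 0) :
    u * (s - u) / ∏ j, (b j - u) =
      ∑ j, (b j * (s - b j) / ∏ k ∈ Finset.univ.erase j, (b k - b j)) * (b j - u)⁻¹ := by
  classical
  set f : Polynomial ℂ := Polynomial.X * (Polynomial.C s - Polynomial.X) with hf
  have hdeg : f.degree < (Finset.univ : Finset (Fin 5)).card := by
    have h1 : f.degree ≤ 2 := by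
      refine le_trans (Polynomial.degree_mul_le _ _) ?_
      have : (Polynomial.C s - Polynomial.X).degree ≤ 1 := by
        refine le_trans (Polynomial.degree_sub_le _ _) ?_
        refine max_le (Polynomial.degree_C_le.trans (by norm_num)) ?_
        simp [Polynomial.degree_X]
      calc Polynomial.X.degree + (Polynomial.C s - Polynomial.X).degree
          ≤ 1 + 1 := add_le_add Polynomial.degree_X_le this
      _ = 2 := by norm_num
    refine lt_of_le_of_lt h1 ?_
    simp
    norm_num
  have hinterp := Lagrange.eq_interpolate (v := b) hb.injOn hdeg
  have hkey : u * (s - u) =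
      ∑ j, (b j * (s - b j)) * ∏ k ∈ Finset.univ.erase j, ((b j - b k)⁻¹ * (u - b k)) := by
    have := congrArg (Polynomial.eval u) hinterp
    rw [Lagrange.interpolate_apply, Polynomial.eval_finset_sum] at this
    have hevalf : f.eval u = u * (s - u) := by simp [hf]
    rw [hevalf] at this
    rw [this]
    refine Finset.sum_congr rfl fun j _ => ?_
    rw [Polynomial.eval_mul, Polynomial.eval_C]
    congr 1
    · simp [hf]
    · rw [Lagrange.basis, Polynomial.eval_prod]
      refine Finset.prod_congr rfl fun k _ => ?_
      simp [Lagrange.basisDivisor]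
  rw [hkey, Finset.sum_div]
  refine Finset.sum_congr rfl fun j _ => ?_
  set E := Finset.univ.erase j with hE
  have hcard : E.card = 4 := by simp [hE]
  have hsplit : ∏ k, (b k - u) = (b j - u) * ∏ k ∈ E, (b k - u) :=
    (Finset.mul_prod_erase univ _ (Finset.mem_univ j)).symm
  have hflip1 : ∏ k ∈ E, (b j - b k) = ∏ k ∈ E, (b k - b j) := by
    calc ∏ k ∈ E, (b j - b k) = ∏ k ∈ E, (-1 * (b k - b j)) := by
          refine Finset.prod_congr rfl fun k _ => by ring
    _ = (-1) ^ E.card * ∏ k ∈ E, (b k - b j) := by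
          rw [Finset.prod_mul_distrib, Finset.prod_const]
    _ = _ := by rw [hcard]; norm_num
  have hflip2 : ∏ k ∈ E, (u - b k) = ∏ k ∈ E, (b k - u) := by
    calc ∏ k ∈ E, (u - b k) = ∏ k ∈ E, (-1 * (b k - u)) := by
          refine Finset.prod_congr rfl fun k _ => by ring
    _ = (-1) ^ E.card * ∏ k ∈ E, (b k - u) := by
          rw [Finset.prod_mul_distrib, Finset.prod_const]
    _ = _ := by rw [hcard]; norm_num
  have hprodE : ∏ k ∈ E, ((b j - b k)⁻¹ * (u - b k)) =
      (∏ k ∈ E, (b k - b j))⁻¹ * ∏ k ∈ E, (b k - u) := by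
    rw [Finset.prod_mul_distrib, hflip2, ← hflip1, Finset.prod_inv_distrib]
  rw [hprodE, hsplit]
  have hPne : (∏ k ∈ E, (b k - b j)) ≠ 0 := by
    apply Finset.prod_ne_zero_iff.mpr
    intro k hk
    have : k ≠ j := (Finset.mem_erase.mp hk).1
    exact sub_ne_zero.mpr (fun h => this (hb h))
  have hQne : (∏ k ∈ E, (b k - u)) ≠ 0 :=
    Finset.prod_ne_zero_iff.mpr fun k _ => hu k
  have hdne : b j - u ≠ 0 := hu j
  field_simp

open Finset in
/-- Residue-sum form of the Rahman-type rational beta integral: for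
`a₁,…,a₅ ∈ ℂ` with negative imaginary parts and pairwise distinct squares,
with `A = a₁+⋯+a₅`,
`(1/(π i)) ∫_ℝ y²(A²−y²)/∏ⱼ (aⱼ+y)(aⱼ−y) dy = Σⱼ aⱼ(A²−aⱼ²)/∏_{k≠j}(aₖ²−aⱼ²)`. -/
theorem rational_beta_Rahman_residues (a : Fin 5 → ℂ)
    (him : ∀ j, (a j).im < 0)
    (hne : ∀ j k, j ≠ k → a j ^ 2 ≠ a k ^ 2)
    (A : ℂ) (hA : A = a 0 + a 1 + a 2 + a 3 + a 4) :
    (1 / ((Real.pi : ℂ) * Complex.I)) *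
        ∫ y : ℝ, ((y : ℂ) ^ 2 * (A ^ 2 - (y : ℂ) ^ 2)) /
          ∏ j, ((a j + (y : ℂ)) * (a j - (y : ℂ))) =
      ∑ j, a j * (A ^ 2 - a j ^ 2) /
        ∏ k ∈ Finset.univ.erase j, (a k ^ 2 - a j ^ 2) := by
  have hbinj : Function.Injective (fun j => a j ^ 2) := by
    intro j k h
    by_contra hjk
    exact hne j k hjk h
  have hInt : ∀ j, Integrable fun y : ℝ => ((a j) ^ 2 - (y:ℂ) ^ 2)⁻¹ :=
    fun j => keyIntegrable _ (him j)
  have hfun : (fun y : ℝ => ((y : ℂ) ^ 2 * (A ^ 2 - (y : ℂ) ^ 2)) /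
          ∏ j, ((a j + (y : ℂ)) * (a j - (y : ℂ)))) =
      fun y : ℝ => ∑ j, (a j ^ 2 * (A ^ 2 - a j ^ 2) /
          ∏ k ∈ Finset.univ.erase j, (a k ^ 2 - a j ^ 2)) * ((a j) ^ 2 - (y:ℂ) ^ 2)⁻¹ := by
    funext y
    have hu : ∀ j, a j ^ 2 - (y:ℂ) ^ 2 ≠ 0 := by
      intro j
      have hp : a j + (y:ℂ) ≠ 0 := fun h => by
        have := congrArg Complex.im h; simp at this; exact (him j).ne this
      have hm : a j - (y:ℂ) ≠ 0 := fun h => by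
        have := congrArg Complex.im h; simp at this; exact (him j).ne this
      have : a j ^ 2 - (y:ℂ) ^ 2 = (a j + y) * (a j - y) := by ring
      rw [this]; exact mul_ne_zero hp hm
    have hpf := partialFractions (fun j => a j ^ 2) hbinj (A ^ 2) ((y:ℂ) ^ 2) hu
    have hden : ∏ j, ((a j + (y : ℂ)) * (a j - (y : ℂ))) = ∏ j, (a j ^ 2 - (y:ℂ) ^ 2) :=
      Finset.prod_congr rfl fun j _ => by ring
    rw [hden]
    exact hpf
  rw [hfun, integral_finset_sum Finset.univ (fun j _ => (hInt j).const_mul _), Finset.mul_sum]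
  refine Finset.sum_congr rfl fun j _ => ?_
  rw [MeasureTheory.integral_const_mul, keyIntegral (a j) (him j) (hInt j)]
  have hπ : (Real.pi : ℂ) * Complex.I ≠ 0 :=
    mul_ne_zero (Complex.ofReal_ne_zero.mpr Real.pi_ne_zero) Complex.I_ne_zero
  have ha0 : a j ≠ 0 := fun h => by
    have := him j; rw [h] at this; simp at this
  have hP : (∏ k ∈ Finset.univ.erase j, (a k ^ 2 - a j ^ 2)) ≠ 0 :=
    Finset.prod_ne_zero_iff.mpr fun k hk =>
      sub_ne_zero.mpr (hne k j (Finset.mem_erase.mp hk).1)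
  field_simp
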